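/- Let q ≥ 1 and let s be a {0,1}-valued sequence of length q with exactly one entry equal to 1, at position j. Then with rate γ = 1/q and residual r = (j − 1)/q, the generated consumption sequence s'(n) = ⌈n·γ − r⌉ − ⌈(n−1)·γ − r⌉ equals s(n) for all 1 ≤ n ≤ q. -/

import Mathlib

/-- If s is a {0,1}-valued length-q sequence with exactly one 1, at position j,
then rate γ = 1/q and residual r = (j − 1)/q generate s via the ceiling formula. -/
theorem consumption_sequence_single_one (q j : ℕ) (hq : 1 ≤ q) (hj1 : 1 ≤ j) (hjq : j ≤ q)
    (s : ℕ → ℤ)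
    (hs01 : ∀ n, 1 ≤ n → n ≤ q → s n = 0 ∨ s n = 1)
    (hsj : s j = 1)
    (hs0 : ∀ n, 1 ≤ n → n ≤ q → n ≠ j → s n = 0) :
    ∀ n, 1 ≤ n → n ≤ q →
      ⌈(n : ℚ) * (1 / q) - ((j : ℚ) - 1) / q⌉ -
        ⌈((n : ℚ) - 1) * (1 / q) - ((j : ℚ) - 1) / q⌉ = s n := by
  intro n hn1 hnq
  have hq0 : (0:ℚ) < q := by exact_mod_cast hq
  have e1 : (n : ℚ) * (1 / q) - ((j : ℚ) - 1) / q = ((n:ℚ) - j + 1)/q := by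
    field_simp
    ring
  have e2 : ((n : ℚ) - 1) * (1 / q) - ((j : ℚ) - 1) / q = ((n:ℚ) - j)/q := by
    field_simp
    ring
  rw [e1, e2]
  have key : ∀ m : ℤ, -q < m → m ≤ q → ⌈((m:ℚ))/q⌉ = if 0 < m then 1 else 0 := by
    intro m hm1 hm2
    split_ifs with h
    · rw [Int.ceil_eq_iff]
      have hm : (0:ℚ) < (m:ℚ) := by exact_mod_cast h
      constructor
      · push_cast
        have : (0:ℚ) < (m:ℚ)/q := div_pos hm hq0
        linarith
      · push_cast; rw [div_le_one hq0]
        exact_mod_cast hm2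
    · rw [Int.ceil_eq_iff]
      push_cast
      constructor
      · rw [lt_div_iff₀ hq0]
        have : (-(q:ℚ)) < m := by exact_mod_cast hm1
        linarith
      · apply div_nonpos_of_nonpos_of_nonneg _ hq0.le
        exact_mod_cast not_lt.mp h
  have hcast : ((n:ℚ) - j + 1) = (((n:ℤ) - j + 1 : ℤ) : ℚ) := by push_cast; ring
  have hcast2 : ((n:ℚ) - j) = (((n:ℤ) - j : ℤ) : ℚ) := by push_cast; ring
  rw [hcast, hcast2, key _ (by omega) (by omega), key _ (by omega) (by omega)]
  rcases lt_trichotomy n j with h | h | h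
  · rw [hs0 n hn1 hnq (by omega)]
    simp [show ¬ (0 < (n:ℤ) - j + 1) by omega, show ¬ (0 < (n:ℤ) - j) by omega]; omega
  · subst h
    rw [hsj]
    simp [show (0 < (n:ℤ) - n + 1) by omega, show ¬ (0 < (n:ℤ) - n) by omega]
  · rw [hs0 n hn1 hnq (by omega)]
    simp [show (0 < (n:ℤ) - j + 1) by omega, show (0 < (n:ℤ) - j) by omega]; simp [h]
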